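/- Let X = c₀ ⊕ ℓ² with norm ‖(x,y)‖ = ‖x‖_∞ + ‖y‖₂, regarded as an ℓ^∞-module via coordinatewise multiplication in each summand. Let x ∈ c₀ ∩ ℓ² be the sequence xₙ = 1/n. Then the closed ℓ^∞-submodule of X generated by the two elements (x,x) and (0,x) is all of X, yet the closed submodule generated by (x,x) alone is isomorphic to ℓ² (hence reflexive), and the closed submodule generated by (0,x) equals {0} ⊕ ℓ², while X itself is not reflexive. -/

import Mathlib

open Filter
open scoped ENNReal ZeroAtInfty

noncomputable section

/-- A Banach space is reflexive if the canonical inclusion into its double dual is surjective. -/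
def IsReflexiveSpace (𝕜 X : Type*) [NontriviallyNormedField 𝕜] [NormedAddCommGroup X]
    [NormedSpace 𝕜 X] : Prop :=
  Function.Surjective (NormedSpace.inclusionInDoubleDual 𝕜 X)

/-- `X = c₀ ⊕ ℓ²` with the norm `‖(x,y)‖ = ‖x‖_∞ + ‖y‖₂`. -/
abbrev X15 : Type _ := WithLp 1 (C₀(ℕ, ℝ) × lp (fun _ : ℕ => ℝ) 2)

/-- Coordinatewise multiplication of an `ℓ^∞` sequence with a `c₀` sequence. -/
def mulC0 (a : lp (fun _ : ℕ => ℝ) ∞) (s : C₀(ℕ, ℝ)) : C₀(ℕ, ℝ) where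
  toFun := fun n => a n * s n
  continuous_toFun := continuous_of_discreteTopology
  zero_at_infty' := by
    refine squeeze_zero_norm (a := fun n => ‖a‖ * ‖s n‖) (fun n => ?_) ?_
    · show ‖a n * s n‖ ≤ ‖a‖ * ‖s n‖
      rw [norm_mul]
      exact mul_le_mul_of_nonneg_right (lp.norm_apply_le_norm ENNReal.top_ne_zero a n)
        (norm_nonneg _)
    · have h0 : Tendsto (fun n => ‖a‖ * ‖s n‖) (cocompact ℕ) (nhds (‖a‖ * ‖(0 : ℝ)‖)) :=
        s.zero_at_infty'.norm.const_mul ‖a‖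
      rw [norm_zero, mul_zero] at h0
      exact h0

/-- Coordinatewise multiplication of an `ℓ^∞` sequence with an `ℓ²` sequence. -/
def mulL2 (a : lp (fun _ : ℕ => ℝ) ∞) (v : lp (fun _ : ℕ => ℝ) 2) : lp (fun _ : ℕ => ℝ) 2 :=
  ⟨fun n => a n * v n, by
    have hv : Summable fun n => ‖v n‖ ^ (2 : ℝ≥0∞).toReal :=
      (memℓp_gen_iff (by norm_num)).1 (lp.memℓp v)
    refine memℓp_gen ?_
    refine Summable.of_nonneg_of_le (fun n => by positivity) (fun n => ?_)
      (hv.mul_left (‖a‖ ^ (2 : ℝ≥0∞).toReal))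
    have h1 : ‖a n * v n‖ ≤ ‖a‖ * ‖v n‖ := by
      rw [norm_mul]
      exact mul_le_mul_of_nonneg_right (lp.norm_apply_le_norm ENNReal.top_ne_zero a n)
        (norm_nonneg _)
    calc ‖a n * v n‖ ^ (2 : ℝ≥0∞).toReal
        ≤ (‖a‖ * ‖v n‖) ^ (2 : ℝ≥0∞).toReal :=
          Real.rpow_le_rpow (norm_nonneg _) h1 (by positivity)
      _ = ‖a‖ ^ (2 : ℝ≥0∞).toReal * ‖v n‖ ^ (2 : ℝ≥0∞).toReal :=
          Real.mul_rpow (norm_nonneg _) (norm_nonneg _)⟩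

/-- The `ℓ^∞`-module action on `X = c₀ ⊕ ℓ²`, coordinatewise in each summand. -/
def act (a : lp (fun _ : ℕ => ℝ) ∞) (p : X15) : X15 :=
  (WithLp.equiv 1 _).symm
    (mulC0 a (WithLp.equiv 1 _ p).1, mulL2 a (WithLp.equiv 1 _ p).2)

/-- The closed `ℓ^∞`-submodule of `X` generated by a set `S`. -/
def genSub (S : Set X15) : Submodule ℝ X15 :=
  (Submodule.span ℝ
    {z : X15 | ∃ a : lp (fun _ : ℕ => ℝ) ∞, ∃ s ∈ S, z = act a s}).topologicalClosure

/-- The sequence `1/n` as an element of `c₀`. -/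
def xc0 : C₀(ℕ, ℝ) where
  toFun := fun n => 1 / ((n : ℝ) + 1)
  continuous_toFun := continuous_of_discreteTopology
  zero_at_infty' := by
    rw [cocompact_eq_atTop (α := ℕ)]
    exact tendsto_one_div_add_atTop_nhds_zero_nat

/-- The sequence `1/n` as an element of `ℓ²`. -/
def xl2 : lp (fun _ : ℕ => ℝ) 2 :=
  ⟨fun n => 1 / ((n : ℝ) + 1), by
    refine memℓp_gen ?_
    have hs : Summable fun n : ℕ => (1 / ((n : ℝ) + 1)) ^ (2 : ℕ) := by
      have h0 : Summable fun n : ℕ => 1 / (n : ℝ) ^ (2 : ℕ) :=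
        (Real.summable_one_div_nat_pow (p := 2)).2 (by norm_num)
      have h1 := (summable_nat_add_iff 1).2 h0
      simpa [add_comm] using h1
    refine hs.congr fun n => ?_
    rw [Real.norm_of_nonneg (by positivity), show ((2 : ℝ≥0∞).toReal) = ((2 : ℕ) : ℝ) by
      norm_num, Real.rpow_natCast]⟩

/-- The generator `(x, x)`. -/
def p1 : X15 := (WithLp.equiv 1 _).symm (xc0, xl2)

/-- The generator `(0, x)`. -/
def p2 : X15 := (WithLp.equiv 1 _).symm (0, xl2)

namespace C0L2Aux

abbrev c0 := C₀(ℕ, ℝ)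
abbrev E2 := lp (fun _ : ℕ => ℝ) 2
abbrev EI := lp (fun _ : ℕ => ℝ) ∞

def prodCLE : X15 ≃L[ℝ] c0 × E2 := WithLp.prodContinuousLinearEquiv 1 ℝ _ _

lemma X15_norm (p : X15) : ‖p‖ = ‖p.fst‖ + ‖p.snd‖ := by
  rw [WithLp.prod_norm_eq_add (by norm_num)]
  norm_num

lemma X15_ext {p q : X15} (h1 : p.fst = q.fst) (h2 : p.snd = q.snd) : p = q := (WithLp.equiv 1 _).injective (Prod.ext h1 h2)

lemma c0_norm_apply_le (f : c0) (n : ℕ) : ‖f n‖ ≤ ‖f‖ := by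
  rw [← ZeroAtInftyContinuousMap.norm_toBCF_eq_norm]
  exact BoundedContinuousFunction.norm_coe_le_norm f.toBCF n

lemma c0_norm_le (f : c0) (C : ℝ) (hC : 0 ≤ C) (h : ∀ n, ‖f n‖ ≤ C) : ‖f‖ ≤ C := by
  rw [← ZeroAtInftyContinuousMap.norm_toBCF_eq_norm]
  exact (BoundedContinuousFunction.norm_le hC).2 h

lemma tendsto_zero_of_l2 (v : E2) : Tendsto (fun n => v n) atTop (nhds 0) := by
  have hv : Summable fun n => ‖v n‖ ^ (2 : ℝ≥0∞).toReal :=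
    (memℓp_gen_iff (by norm_num)).1 (lp.memℓp v)
  have h1 : Tendsto (fun n => ‖v n‖ ^ (2 : ℝ≥0∞).toReal) atTop (nhds 0) :=
    hv.tendsto_atTop_zero
  have ht : (2 : ℝ≥0∞).toReal = ((2:ℕ):ℝ) := by norm_num
  rw [ht] at h1
  simp only [Real.rpow_natCast] at h1
  have h2 : Tendsto (fun n => ‖v n‖) atTop (nhds 0) := by
    have h3 := (Real.continuous_sqrt.tendsto 0).comp h1
    simp only [Function.comp_def, Real.sqrt_zero] at h3
    refine h3.congr fun n => ?_
    rw [Real.sqrt_sq (norm_nonneg _)]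
  exact tendsto_zero_iff_norm_tendsto_zero.2 h2

/-- inclusion ℓ² → c₀ as a linear map -/
def iota0 : E2 →ₗ[ℝ] c0 where
  toFun v := { toFun := fun n => v n
               continuous_toFun := continuous_of_discreteTopology
               zero_at_infty' := by rw [cocompact_eq_atTop (α := ℕ)]; exact tendsto_zero_of_l2 v }
  map_add' v w := by ext n; simp [lp.coeFn_add]
  map_smul' c v := by ext n; simp [lp.coeFn_smul]

def iotaL : E2 →L[ℝ] c0 :=
  iota0.mkContinuous 1 (fun v => by
    rw [one_mul]
    exact c0_norm_le _ _ (norm_nonneg _) fun n =>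
      lp.norm_apply_le_norm two_ne_zero v n)

lemma iotaL_apply (v : E2) (n : ℕ) : iotaL v n = v n := rfl

/-- the map w ↦ (ι w, w) : ℓ² → X -/
def TL : E2 →L[ℝ] X15 :=
  (prodCLE.symm : c0 × E2 →L[ℝ] X15).comp (iotaL.prod (ContinuousLinearMap.id ℝ E2))

/-- the map w ↦ (0, w) : ℓ² → X -/
def inrL : E2 →L[ℝ] X15 :=
  (prodCLE.symm : c0 × E2 →L[ℝ] X15).comp ((0 : E2 →L[ℝ] c0).prod (ContinuousLinearMap.id ℝ E2))

lemma TL_fst (w : E2) : (TL w).fst = iotaL w := rfl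
lemma TL_snd (w : E2) : (TL w).snd = w := rfl
lemma inrL_fst (w : E2) : (inrL w).fst = 0 := rfl
lemma inrL_snd (w : E2) : (inrL w).snd = w := rfl

def fstL : X15 →L[ℝ] c0 := (ContinuousLinearMap.fst ℝ c0 E2).comp (prodCLE : X15 →L[ℝ] c0 × E2)
def sndL : X15 →L[ℝ] E2 := (ContinuousLinearMap.snd ℝ c0 E2).comp (prodCLE : X15 →L[ℝ] c0 × E2)

lemma fstL_apply (p : X15) : fstL p = p.fst := rfl
lemma sndL_apply (p : X15) : sndL p = p.snd := rfl

lemma TL_antilip : AntilipschitzWith 1 TL := by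
  refine ContinuousLinearMap.antilipschitz_of_bound TL fun w => ?_
  rw [NNReal.coe_one, one_mul, X15_norm, TL_snd]
  have := norm_nonneg (TL w).fst
  linarith

lemma TL_closedRange : IsClosed (Set.range TL) :=
  TL_antilip.isClosed_range TL.uniformContinuous

/-! ### computations with `act` -/

lemma act_fst (a : EI) (p : X15) : (act a p).fst = mulC0 a p.fst := rfl
lemma act_snd (a : EI) (p : X15) : (act a p).snd = mulL2 a p.snd := rfl
lemma mulC0_apply (a : EI) (s : c0) (n : ℕ) : mulC0 a s n = a n * s n := rfl
lemma mulL2_apply (a : EI) (v : E2) (n : ℕ) : (mulL2 a v : ℕ → ℝ) n = a n * v n := rfl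
lemma xl2_apply (n : ℕ) : (xl2 : ℕ → ℝ) n = 1 / ((n : ℝ) + 1) := rfl
lemma xc0_apply (n : ℕ) : xc0 n = 1 / ((n : ℝ) + 1) := rfl

lemma act_p1 (a : EI) : act a p1 = TL (mulL2 a xl2) := by
  refine X15_ext ?_ rfl
  show mulC0 a xc0 = iotaL (mulL2 a xl2)
  ext n
  rfl

lemma act_p2 (a : EI) : act a p2 = inrL (mulL2 a xl2) := by
  refine X15_ext ?_ rfl
  show mulC0 a (0 : c0) = 0
  ext n
  exact mul_zero _

def en (n : ℕ) : E2 := lp.single 2 n 1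
def an (n : ℕ) : EI := ((n : ℝ) + 1) • lp.single ∞ n 1

lemma single_apply' (n k : ℕ) (c : ℝ) :
    lp.single (E := fun _ : ℕ => ℝ) 2 n c k = if k = n then c else 0 := by
  rw [lp.single_apply]
  split_ifs with h
  · subst h; simp
  · simp [h]

lemma single_inf_apply' (n k : ℕ) (c : ℝ) :
    lp.single (E := fun _ : ℕ => ℝ) ∞ n c k = if k = n then c else 0 := by
  rw [lp.single_apply]
  split_ifs with h
  · subst h; simp
  · simp [h]

lemma single_eq_smul (n : ℕ) (c : ℝ) :
    lp.single (E := fun _ : ℕ => ℝ) 2 n c = c • en n := by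
  ext k
  rw [lp.coeFn_smul, Pi.smul_apply, single_apply', en, single_apply']
  split_ifs with h
  · simp
  · simp

lemma mulL2_an (n : ℕ) : mulL2 (an n) xl2 = en n := by
  ext k
  rw [mulL2_apply, en, single_apply', xl2_apply]
  show (((n : ℝ) + 1) • lp.single (E := fun _ : ℕ => ℝ) ∞ n 1) k * _ = _
  rw [lp.coeFn_smul, Pi.smul_apply, single_inf_apply']
  split_ifs with h
  · subst h; simp; field_simp
  · simp

/-! ### genSub basics -/

lemma genSub_isClosed (S : Set X15) : IsClosed (genSub S : Set X15) :=
  Submodule.isClosed_topologicalClosure _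

lemma act_mem_genSub {S : Set X15} {s : X15} (hs : s ∈ S) (a : EI) : act a s ∈ genSub S :=
  Submodule.le_topologicalClosure _ (Submodule.subset_span ⟨a, s, hs, rfl⟩)

lemma hasSum_mem_genSub {S : Set X15} {f : ℕ → X15} {z : X15} (h : HasSum f z)
    (hf : ∀ n, f n ∈ genSub S) : z ∈ genSub S :=
  (genSub_isClosed S).mem_of_tendsto h
    (Filter.Eventually.of_forall fun s => sum_mem fun n _ => hf n)

lemma TL_single_mem {S : Set X15} (hp1 : p1 ∈ S) (n : ℕ) (c : ℝ) :
    TL (lp.single 2 n c) ∈ genSub S := by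
  rw [single_eq_smul, map_smul]
  refine Submodule.smul_mem _ _ ?_
  rw [← mulL2_an, ← act_p1]
  exact act_mem_genSub hp1 (an n)

lemma inrL_single_mem {S : Set X15} (hp2 : p2 ∈ S) (n : ℕ) (c : ℝ) :
    inrL (lp.single 2 n c) ∈ genSub S := by
  rw [single_eq_smul, map_smul]
  refine Submodule.smul_mem _ _ ?_
  rw [← mulL2_an, ← act_p2]
  exact act_mem_genSub hp2 (an n)

lemma TL_mem {S : Set X15} (hp1 : p1 ∈ S) (w : E2) : TL w ∈ genSub S :=
  hasSum_mem_genSub ((lp.hasSum_single (by norm_num) w).mapL TL)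
    (fun n => TL_single_mem hp1 n (w n))

lemma inrL_mem {S : Set X15} (hp2 : p2 ∈ S) (w : E2) : inrL w ∈ genSub S :=
  hasSum_mem_genSub ((lp.hasSum_single (by norm_num) w).mapL inrL)
    (fun n => inrL_single_mem hp2 n (w n))

/-! ### identification of the submodules -/

lemma genSub_p1_eq : genSub {p1} = LinearMap.range (TL : E2 →ₗ[ℝ] X15) := by
  apply le_antisymm
  · refine Submodule.topologicalClosure_minimal _ ?_ ?_
    · rw [Submodule.span_le]
      rintro z ⟨a, s, hs, rfl⟩
      rw [Set.mem_singleton_iff] at hs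
      subst hs
      exact ⟨mulL2 a xl2, (act_p1 a).symm⟩
    · have h : (LinearMap.range (TL : E2 →ₗ[ℝ] X15) : Set X15) = Set.range TL := by
        ext z; simp [LinearMap.mem_range]
      rw [h]
      exact TL_closedRange
  · rintro z ⟨w, rfl⟩
    exact TL_mem (Set.mem_singleton p1) w

lemma genSub_p2_eq : genSub {p2} = LinearMap.ker (fstL : X15 →ₗ[ℝ] c0) := by
  apply le_antisymm
  · refine Submodule.topologicalClosure_minimal _ ?_ ?_
    · rw [Submodule.span_le]
      rintro z ⟨a, s, hs, rfl⟩
      rw [Set.mem_singleton_iff] at hs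
      subst hs
      rw [SetLike.mem_coe, LinearMap.mem_ker, act_p2]
      rfl
    · exact ContinuousLinearMap.isClosed_ker fstL
  · intro z hz
    rw [LinearMap.mem_ker] at hz
    have hz' : z.fst = 0 := hz
    have hzz : z = inrL z.snd := X15_ext (by rw [inrL_fst]; exact hz') rfl
    rw [hzz]
    exact inrL_mem (Set.mem_singleton p2) z.snd

/-! ### the full module is generated by `p1, p2` -/

def wk (c : c0) (k : ℕ) : E2 := ∑ n ∈ Finset.range k, lp.single 2 n (c n)

lemma wk_apply (c : c0) (k n : ℕ) : (wk c k : ℕ → ℝ) n = if n < k then c n else 0 := by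
  rw [wk, lp.coeFn_sum, Finset.sum_apply]
  have h : ∀ m ∈ Finset.range k, lp.single (E := fun _ : ℕ => ℝ) 2 m (c m) n
      = if n = m then c m else 0 := fun m _ => single_apply' m n (c m)
  rw [Finset.sum_congr rfl h, Finset.sum_ite_eq]
  simp [Finset.mem_range]

lemma genSub_union_eq_top : genSub {p1, p2} = ⊤ := by
  have hp1 : p1 ∈ ({p1, p2} : Set X15) := Set.mem_insert _ _
  have hp2 : p2 ∈ ({p1, p2} : Set X15) := Set.mem_insert_of_mem _ rfl
  rw [eq_top_iff]
  rintro p -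
  set c : c0 := p.fst with hc
  set q : ℕ → X15 := fun k => TL (wk c k) - inrL (wk c k) + inrL p.snd with hq
  have hmem : ∀ k, q k ∈ genSub {p1, p2} := fun k =>
    add_mem (sub_mem (TL_mem hp1 _) (inrL_mem hp2 _)) (inrL_mem hp2 _)
  have htend : Tendsto q atTop (nhds p) := by
    rw [Metric.tendsto_atTop]
    intro ε hε
    have hct : Tendsto (fun n => c n) atTop (nhds 0) := by
      have := c.zero_at_infty'
      rwa [cocompact_eq_atTop (α := ℕ)] at this
    obtain ⟨N, hN⟩ := (Metric.tendsto_atTop.1 hct) (ε / 2) (by linarith)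
    refine ⟨N, fun k hk => ?_⟩
    have hfst : (q k - p).fst = iotaL (wk c k) - c := by
      show fstL (q k - p) = _
      rw [map_sub, fstL_apply p, ← hc, hq]
      simp only [map_add, map_sub]
      show (TL (wk c k)).fst - (inrL (wk c k)).fst + (inrL p.snd).fst - c = _
      rw [TL_fst, inrL_fst, inrL_fst]
      abel
    have hsnd : (q k - p).snd = 0 := by
      show sndL (q k - p) = 0
      rw [map_sub, sndL_apply p, hq]
      simp only [map_add, map_sub]
      show (TL (wk c k)).snd - (inrL (wk c k)).snd + (inrL p.snd).snd - p.snd = 0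
      rw [TL_snd, inrL_snd, inrL_snd]
      abel
    rw [dist_eq_norm, X15_norm, hfst, hsnd, norm_zero, add_zero]
    have hb : ‖iotaL (wk c k) - c‖ ≤ ε / 2 := by
      refine c0_norm_le _ _ (by linarith) fun n => ?_
      have happ : (iotaL (wk c k) - c) n = (if n < k then c n else 0) - c n := by
        show iotaL (wk c k) n - c n = _
        rw [iotaL_apply, wk_apply]
      rw [happ]
      by_cases hn : n < k
      · simp [hn]; linarith
      · rw [if_neg hn, zero_sub, norm_neg]
        have := hN n (le_trans hk (not_lt.1 hn))
        rw [dist_zero_right] at this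
        exact this.le
    linarith
  exact (genSub_isClosed _).mem_of_tendsto htend (Filter.Eventually.of_forall hmem)

/-! ### the submodule generated by `p1` is isomorphic to `ℓ²` -/

instance : CompleteSpace ↥(genSub ({p1} : Set X15)) :=
  (genSub_isClosed _).completeSpace_coe

def phi : ↥(genSub ({p1} : Set X15)) →L[ℝ] E2 :=
  sndL.comp (Submodule.subtypeL _)

lemma phi_apply (z : ↥(genSub ({p1} : Set X15))) : phi z = (z : X15).snd := rfl

lemma eq_TL_snd (z : ↥(genSub ({p1} : Set X15))) : (z : X15) = TL ((z : X15).snd) := by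
  have hz : (z : X15) ∈ LinearMap.range (TL : E2 →ₗ[ℝ] X15) := by
    rw [← genSub_p1_eq]; exact z.2
  obtain ⟨w, hw⟩ := hz
  have : w = (z : X15).snd := by rw [← hw, ContinuousLinearMap.coe_coe, TL_snd]
  rw [← this, ← hw, ContinuousLinearMap.coe_coe]

lemma phi_ker : phi.ker = ⊥ := by
  apply LinearMap.ker_eq_bot_of_injective
  intro z z' h
  rw [ContinuousLinearMap.coe_coe, phi_apply, phi_apply] at h
  apply Subtype.ext
  rw [eq_TL_snd z, eq_TL_snd z', h]

lemma phi_range : phi.range = ⊤ := by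
  rw [LinearMap.range_eq_top]
  intro w
  exact ⟨⟨TL w, TL_mem (Set.mem_singleton p1) w⟩, by rw [ContinuousLinearMap.coe_coe, phi_apply]; exact TL_snd w⟩

set_option synthInstance.maxHeartbeats 1000000 in
def eqv : ↥(genSub ({p1} : Set X15)) ≃L[ℝ] E2 :=
  ContinuousLinearEquiv.ofBijective (𝕜 := ℝ) (𝕜' := ℝ) (σ := RingHom.id ℝ) (σ' := RingHom.id ℝ) (E := ↥(genSub ({p1} : Set X15))) (F := E2) phi phi_ker phi_range

/-! ### non-reflexivity -/

def w2 : ℕ → ℝ := fun n => (1 / 2 : ℝ) ^ (n + 1)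

lemma w2_pos (n : ℕ) : 0 < w2 n := by
  show (0:ℝ) < (1/2)^(n+1)
  positivity

lemma w2_summable : Summable w2 := by
  have h : Summable fun n : ℕ => (1 / 2 : ℝ) ^ n := summable_geometric_two
  exact (h.mul_right (1 / 2)).congr fun n => (pow_succ (1/2 : ℝ) n).symm

lemma w2_tsum : ∑' n, w2 n = 1 := by
  have h1 : ∀ n : ℕ, w2 n = (1 / 2 : ℝ) ^ n * (1 / 2) := fun n => pow_succ _ _
  rw [tsum_congr h1, tsum_mul_right, tsum_geometric_two]
  norm_num

lemma w2_sum (k : ℕ) : ∑ n ∈ Finset.range k, w2 n = 1 - (1 / 2 : ℝ) ^ k := by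
  induction k with
  | zero => simp
  | succ k ih => rw [Finset.sum_range_succ, ih, w2]; ring

lemma g_summable (c : c0) : Summable fun n => c n * w2 n := by
  refine Summable.of_norm_bounded (w2_summable.mul_left ‖c‖) fun n => ?_
  rw [norm_mul, Real.norm_of_nonneg (w2_pos n).le]
  exact mul_le_mul_of_nonneg_right (c0_norm_apply_le c n) (w2_pos n).le

def glin : c0 →ₗ[ℝ] ℝ where
  toFun c := ∑' n, c n * w2 n
  map_add' c d := by
    rw [← Summable.tsum_add (g_summable c) (g_summable d)]
    exact tsum_congr fun n => by
      show (c + d) n * w2 n = _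
      rw [ZeroAtInftyContinuousMap.coe_add, Pi.add_apply]; ring
  map_smul' r c := by
    show ∑' n, (r • c) n * w2 n = r • ∑' n, c n * w2 n
    rw [smul_eq_mul, ← tsum_mul_left]
    exact tsum_congr fun n => by
      show (r • c) n * w2 n = _
      rw [ZeroAtInftyContinuousMap.coe_smul, Pi.smul_apply, smul_eq_mul]; ring

lemma glin_bound (c : c0) : ‖glin c‖ ≤ ‖c‖ := by
  have h1 : ‖glin c‖ ≤ ∑' n, ‖c n * w2 n‖ :=
    norm_tsum_le_tsum_norm (g_summable c).norm
  have h2 : ∑' n, ‖c n * w2 n‖ ≤ ∑' n, ‖c‖ * w2 n := by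
    refine Summable.tsum_le_tsum (fun n => ?_) (g_summable c).norm (w2_summable.mul_left _)
    rw [norm_mul, Real.norm_of_nonneg (w2_pos n).le]
    exact mul_le_mul_of_nonneg_right (c0_norm_apply_le c n) (w2_pos n).le
  have h3 : ∑' n, ‖c‖ * w2 n = ‖c‖ := by rw [tsum_mul_left, w2_tsum, mul_one]
  linarith

def gL : c0 →L[ℝ] ℝ :=
  glin.mkContinuous 1 fun c => by rw [one_mul]; exact glin_bound c

lemma gL_apply (c : c0) : gL c = ∑' n, c n * w2 n := rfl

def fX : X15 →L[ℝ] ℝ := gL.comp fstL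

lemma fX_apply (z : X15) : fX z = ∑' n, z.fst n * w2 n := rfl

lemma fX_norm_ge : 1 ≤ ‖fX‖ := by
  have key : ∀ k : ℕ, 1 - (1 / 2 : ℝ) ^ k ≤ ‖fX‖ := by
    intro k
    set u : E2 := ∑ n ∈ Finset.range k, lp.single 2 n ((1 : ℝ)) with hu
    set x : X15 := TL u - inrL u with hx
    have hxfst : x.fst = iotaL u := by
      show fstL x = _
      rw [hx, map_sub]
      show (TL u).fst - (inrL u).fst = _
      rw [TL_fst, inrL_fst, sub_zero]
    have hxsnd : x.snd = 0 := by
      show sndL x = 0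
      rw [hx, map_sub]
      show (TL u).snd - (inrL u).snd = 0
      rw [TL_snd, inrL_snd, sub_self]
    have hiu : ∀ n, iotaL u n = if n < k then (1 : ℝ) else 0 := by
      intro n
      have : u = wk (iotaL u) k ∨ True := Or.inr trivial
      rw [iotaL_apply, hu, lp.coeFn_sum, Finset.sum_apply]
      have h : ∀ m ∈ Finset.range k, lp.single (E := fun _ : ℕ => ℝ) 2 m (1 : ℝ) n
          = if n = m then (1 : ℝ) else 0 := fun m _ => single_apply' m n 1
      rw [Finset.sum_congr rfl h, Finset.sum_ite_eq]
      simp [Finset.mem_range]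
    have hxnorm : ‖x‖ ≤ 1 := by
      rw [X15_norm, hxfst, hxsnd, norm_zero, add_zero]
      refine c0_norm_le _ _ one_pos.le fun n => ?_
      rw [hiu n]
      split_ifs <;> simp
    have hfx : fX x = 1 - (1 / 2 : ℝ) ^ k := by
      rw [fX_apply, hxfst]
      have h : ∑' n, iotaL u n * w2 n = ∑ n ∈ Finset.range k, iotaL u n * w2 n := by
        refine tsum_eq_sum fun n hn => ?_
        rw [hiu n, if_neg (by simpa [Finset.mem_range] using hn), zero_mul]
      rw [h, ← w2_sum k]
      refine Finset.sum_congr rfl fun n hn => ?_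
      rw [hiu n, if_pos (Finset.mem_range.1 hn), one_mul]
    calc 1 - (1 / 2 : ℝ) ^ k = fX x := hfx.symm
      _ ≤ ‖fX x‖ := le_abs_self _
      _ ≤ ‖fX‖ * ‖x‖ := fX.le_opNorm x
      _ ≤ ‖fX‖ * 1 := mul_le_mul_of_nonneg_left hxnorm (norm_nonneg fX)
      _ = ‖fX‖ := mul_one _
  have hlim : Tendsto (fun k : ℕ => 1 - (1 / 2 : ℝ) ^ k) atTop (nhds 1) := by
    have := tendsto_pow_atTop_nhds_zero_of_lt_one (le_of_lt one_half_pos)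
      (by norm_num : (1 / 2 : ℝ) < 1)
    have h2 := (tendsto_const_nhds (x := (1:ℝ)) (f := atTop (α := ℕ))).sub this
    simpa using h2
  exact le_of_tendsto hlim (Filter.Eventually.of_forall key)

lemma fX_lt_one {z : X15} (hz : ‖z‖ ≤ 1) : fX z < 1 := by
  set c : c0 := z.fst with hc
  have hcnorm : ‖c‖ ≤ 1 := by
    have := X15_norm z
    have h2 := norm_nonneg z.snd
    rw [this] at hz
    linarith
  have hct : Tendsto (fun n => c n) atTop (nhds 0) := by
    have := c.zero_at_infty'
    rwa [cocompact_eq_atTop (α := ℕ)] at this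
  obtain ⟨n₀, hn₀⟩ : ∃ n₀, ‖c n₀‖ ≤ 1 / 2 := by
    obtain ⟨N, hN⟩ := (Metric.tendsto_atTop.1 hct) (1 / 2) one_half_pos
    exact ⟨N, by have := hN N le_rfl; rw [dist_zero_right] at this; exact this.le⟩
  set bound : ℕ → ℝ := fun n => (if n = n₀ then (1 / 2 : ℝ) else 1) * w2 n with hbound
  have hbsummable : Summable bound := by
    refine Summable.of_nonneg_of_le (fun n => ?_) (fun n => ?_) w2_summable
    · rw [hbound]; dsimp only; split_ifs
      · exact mul_nonneg (by norm_num) (w2_pos n).le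
      · exact mul_nonneg (by norm_num) (w2_pos n).le
    · rw [hbound]; dsimp only; split_ifs with h
      · have := (w2_pos n).le
        linarith
      · rw [one_mul]
  have hle : fX z ≤ ∑' n, bound n := by
    rw [fX_apply, ← hc]
    refine Summable.tsum_le_tsum (fun n => ?_) (g_summable c) hbsummable
    rw [hbound]
    dsimp only
    have h1 : c n * w2 n ≤ ‖c n‖ * w2 n :=
      mul_le_mul_of_nonneg_right (le_abs_self _) (w2_pos n).le
    split_ifs with h
    · subst h
      exact h1.trans (mul_le_mul_of_nonneg_right hn₀ (w2_pos n).le)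
    · exact h1.trans (mul_le_mul_of_nonneg_right
        ((c0_norm_apply_le c n).trans hcnorm) (w2_pos n).le)
  have hsum : ∑' n, bound n = 1 - w2 n₀ / 2 := by
    have heq : ∀ n, bound n = w2 n - (if n = n₀ then w2 n₀ / 2 else 0) := by
      intro n
      rw [hbound]
      dsimp only
      split_ifs with h
      · subst h; ring
      · ring
    rw [tsum_congr heq, Summable.tsum_sub w2_summable
      (summable_of_ne_finset_zero (s := {n₀}) fun n hn => by
        rw [if_neg (by simpa using hn)]),
      w2_tsum, tsum_ite_eq n₀ (fun _ => w2 n₀ / 2)]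
  have := w2_pos n₀
  rw [hsum] at hle
  linarith

lemma X15_not_reflexive : ¬ IsReflexiveSpace ℝ X15 := by
  intro h
  have hf0 : fX ≠ 0 := by
    intro h0
    have h1 : ‖fX‖ = 0 := by rw [h0]; exact ContinuousLinearMap.opNorm_zero
    have h2 := fX_norm_ge
    linarith
  obtain ⟨G, hG1, hGf⟩ :=
    exists_dual_vector ℝ (fX : StrongDual ℝ X15) (fun h => hf0 ((ContinuousLinearMap.opNorm_zero_iff fX).1 h))
  obtain ⟨z, hz⟩ := h G
  have hznorm : ‖z‖ = 1 := by
    have h3 := (NormedSpace.inclusionInDoubleDualLi ℝ (E := X15)).norm_map z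
    rw [← hG1, ← hz]
    exact h3.symm
  have hGf' : G fX = ‖fX‖ := by simpa using hGf
  have hfz : fX z = ‖fX‖ := by
    rw [← hGf', ← hz]
    rfl
  have h1 := fX_lt_one (le_of_eq hznorm)
  have h2 := fX_norm_ge
  rw [hfz] at h1
  linarith

end C0L2Aux

/-- The two elements `(x,x)` and `(0,x)` generate `X = c₀ ⊕ ℓ²` as a closed `ℓ^∞`-module; the
submodule generated by `(x,x)` alone is isomorphic to `ℓ²` (hence reflexive) and the submodule
generated by `(0,x)` is `{0} ⊕ ℓ²`; nevertheless `X` itself is not reflexive. -/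
theorem c0_oplus_l2_example :
    genSub {p1, p2} = ⊤ ∧
      (∃ e : ↥(genSub {p1}) ≃L[ℝ] lp (fun _ : ℕ => ℝ) 2, True) ∧
      ((genSub {p2} : Set X15) = {p : X15 | (WithLp.equiv 1 _ p).1 = 0}) ∧
      ¬ IsReflexiveSpace ℝ X15 := by
  refine ⟨C0L2Aux.genSub_union_eq_top, ⟨C0L2Aux.eqv, trivial⟩, ?_, C0L2Aux.X15_not_reflexive⟩
  rw [C0L2Aux.genSub_p2_eq]
  ext z
  rw [SetLike.mem_coe, LinearMap.mem_ker]
  exact Iff.rfl
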